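/- The open ball B_∞(f, r) = {g ∈ C(ℝ) : sup_x |f(x)−g(x)| < r} is not a Gδ subset of C(ℝ) with the compact-open topology; indeed, the empty set is comeager in B_∞(f,r) with the subspace topology: B_∞(f,r) is the intersection of countably many of its dense open subsets with empty intersection. -/

import Mathlib

open scoped ENNReal

open Set Filter Topology

/-- The open uniform ball `B_∞(f, r) = {g | sup_x |f(x) - g(x)| < r}` in `C(ℝ)`. -/
def uniformBall (f : C(ℝ, ℝ)) (r : ℝ) : Set C(ℝ, ℝ) :=
  {g | (⨆ x : ℝ, ENNReal.ofReal |f x - g x|) < ENNReal.ofReal r}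

/-- Preimage of a Gδ set under a continuous map is Gδ. -/
lemma isGδ_preimage' {X Y : Type*} [TopologicalSpace X] [TopologicalSpace Y] {f : X → Y}
    (hf : Continuous f) {s : Set Y} (hs : IsGδ s) : IsGδ (f ⁻¹' s) := by
  obtain ⟨T, hTo, hTc, rfl⟩ := hs
  rw [Set.sInter_eq_biInter, Set.preimage_iInter₂]
  exact IsGδ.biInter hTc fun t ht => ((hTo t ht).preimage hf).isGδ

/-- If a set `B` in a complete uniform space with countably generated uniformity admits
countably many dense open subsets (in the subspace topology) with empty intersection,
then `B` is not Gδ. -/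
lemma not_isGδ_of_denseOpen {X : Type*} [UniformSpace X] [CompleteSpace X]
    [(uniformity X).IsCountablyGenerated] {B : Set X}
    (hne : B.Nonempty) (U : ℕ → Set B)
    (hU : ∀ n, IsOpen (U n) ∧ Dense (U n)) (hI : (⋂ n, U n) = ∅) : ¬ IsGδ B := by
  intro hGδ
  set C : Set X := closure B with hC
  haveI : CompleteSpace C := isClosed_closure.completeSpace_coe
  haveI : (uniformity C).IsCountablyGenerated := by
    rw [uniformity_setCoe]; infer_instance
  haveI : BaireSpace C := inferInstance
  have hO : ∀ n, ∃ O : Set X, IsOpen O ∧ Subtype.val ⁻¹' O = U n := fun n =>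
    isOpen_induced_iff.1 (hU n).1
  choose O hOopen hOeq using hO
  set A : ℕ → Set C := fun n => Subtype.val ⁻¹' (O n ∩ B) with hA
  have hAgδ : ∀ n, IsGδ (A n) :=
    fun n => isGδ_preimage' continuous_subtype_val (((hOopen n).isGδ).inter hGδ)
  have hBsub : ∀ n, B ⊆ closure (O n ∩ B) := by
    intro n x hx
    have hd : (⟨x, hx⟩ : B) ∈ closure (U n) := (hU n).2 _
    rw [closure_subtype] at hd
    convert hd using 2
    rw [← hOeq n, Subtype.image_preimage_coe]
    exact Set.inter_comm _ _
  have hAdense : ∀ n, Dense (A n) := by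
    intro n
    intro c
    rw [closure_subtype]
    have : (c : X) ∈ closure (O n ∩ B) :=
      closure_minimal (hBsub n) isClosed_closure c.2
    refine mem_of_subset_of_mem (closure_mono ?_) this
    intro y hy
    exact ⟨⟨y, subset_closure hy.2⟩, Set.mem_preimage.2 hy, rfl⟩
  have hdense : Dense (⋂ n, A n) := dense_iInter_of_Gδ hAgδ hAdense
  haveI : Nonempty C := ⟨⟨hne.choose, subset_closure hne.choose_spec⟩⟩
  obtain ⟨c, hc⟩ := hdense.nonempty
  simp only [Set.mem_iInter, Set.mem_preimage, Set.mem_inter_iff] at hc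
  have hcB : (c : X) ∈ B := (hc 0).2
  have : (⟨(c : X), hcB⟩ : B) ∈ ⋂ n, U n := by
    refine Set.mem_iInter.2 fun n => ?_
    rw [← hOeq n]
    exact (hc n).1
  rw [hI] at this
  exact this

lemma mem_uniformBall_bound' {f g : C(ℝ, ℝ)} {r : ℝ} (hg : g ∈ uniformBall f r) :
    ∃ t : ℝ, 0 ≤ t ∧ t < r ∧ ∀ x, |f x - g x| ≤ t := by
  set S := ⨆ x : ℝ, ENNReal.ofReal |f x - g x| with hS
  have hlt : S < ENNReal.ofReal r := hg
  have hne : S ≠ ⊤ := hlt.ne_top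
  refine ⟨S.toReal, ENNReal.toReal_nonneg, (ENNReal.lt_ofReal_iff_toReal_lt hne).1 hlt, fun x => ?_⟩
  exact (ENNReal.ofReal_le_iff_le_toReal hne).1 (le_iSup (fun x => ENNReal.ofReal |f x - g x|) x)

lemma mem_uniformBall_of_bound' {f g : C(ℝ, ℝ)} {r t : ℝ} (hr : 0 < r) (ht : t < r)
    (h : ∀ x, |f x - g x| ≤ t) : g ∈ uniformBall f r :=
  lt_of_le_of_lt (iSup_le fun x => ENNReal.ofReal_le_ofReal (h x))
    ((ENNReal.ofReal_lt_ofReal_iff hr).2 ht)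

lemma isOpen_W (f : C(ℝ, ℝ)) (r : ℝ) (n : ℕ) :
    IsOpen {g : C(ℝ, ℝ) | ∃ x : ℝ, (n : ℝ) < |x| ∧ r - r / (n + 1) < |f x - g x|} := by
  have : {g : C(ℝ, ℝ) | ∃ x : ℝ, (n : ℝ) < |x| ∧ r - r / (n + 1) < |f x - g x|} =
      ⋃ x : {x : ℝ // (n : ℝ) < |x|},
        (fun g : C(ℝ, ℝ) => |f x.1 - g x.1|) ⁻¹' Set.Ioi (r - r / (n + 1)) := by
    ext g
    simp only [Set.mem_setOf_eq, Set.mem_iUnion, Set.mem_preimage, Set.mem_Ioi, Subtype.exists]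
    tauto
  rw [this]
  exact isOpen_iUnion fun x => isOpen_Ioi.preimage
    ((continuous_const.sub (ContinuousEvalConst.continuous_eval_const x.1)).abs)

lemma dense_W (f : C(ℝ, ℝ)) (r : ℝ) (hr : 0 < r) (n : ℕ) :
    Dense (Subtype.val ⁻¹' {g : C(ℝ, ℝ) | ∃ x : ℝ, (n : ℝ) < |x| ∧ r - r / (n + 1) < |f x - g x|} :
      Set (uniformBall f r)) := by
  rw [dense_iff_inter_open]
  rintro V hV hVne
  obtain ⟨O, hO, rfl⟩ := isOpen_induced_iff.1 hV
  obtain ⟨⟨g, hgB⟩, hgO⟩ := hVne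
  rw [Set.mem_preimage] at hgO
  have hbasis := nhds_basis_uniformity'
    (Metric.uniformity_basis_dist.compactConvergenceUniformity (α := ℝ) (β := ℝ)) (x := g)
  obtain ⟨⟨K, ε⟩, ⟨hK, hε⟩, hsub⟩ := hbasis.mem_iff.1 (hO.mem_nhds hgO)
  obtain ⟨M0, hM0⟩ := hK.isBounded.subset_closedBall 0
  set M : ℝ := max M0 n with hM
  have hM0le : M0 ≤ M := le_max_left _ _
  have hnM : (n : ℝ) ≤ M := le_max_right _ _
  have hMnn : (0:ℝ) ≤ M := le_trans (Nat.cast_nonneg n) hnM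
  set rn : ℝ := r - r / (n + 1) with hrn
  set s : ℝ := (rn + r) / 2 with hs
  clear_value M rn s
  clear hM
  have hone : (1:ℝ) ≤ (n:ℝ) + 1 := by
    have : (0:ℝ) ≤ (n:ℝ) := Nat.cast_nonneg n
    linarith
  have hdle : r / ((n:ℝ) + 1) ≤ r := div_le_self hr.le hone
  have hdpos : 0 < r / ((n:ℝ) + 1) := by positivity
  have hrn0 : 0 ≤ rn := by rw [hrn]; linarith
  have hrnr : rn < r := by rw [hrn]; linarith
  have hs0 : 0 ≤ s := by rw [hs]; linarith
  have hsr : s < r := by rw [hs]; linarith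
  have hrns : rn < s := by rw [hs]; linarith
  obtain ⟨t, ht0, htr, htb⟩ := mem_uniformBall_bound' hgB
  set φ : ℝ → ℝ := fun x => min 1 (max (|x| - M) 0) with hφ
  have hφ0 : ∀ x, 0 ≤ φ x := fun x => le_min zero_le_one (le_max_right _ _)
  have hφ1 : ∀ x, φ x ≤ 1 := fun x => min_le_left _ _
  have hcont : Continuous fun x : ℝ => g x + φ x * (f x - g x - s) := by
    apply g.continuous.add
    exact ((continuous_const.min ((continuous_abs.sub continuous_const).max
      continuous_const)).mul ((f.continuous.sub g.continuous).sub continuous_const))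
  set h : C(ℝ, ℝ) := ⟨fun x => g x + φ x * (f x - g x - s), hcont⟩ with hh
  have hval : ∀ x, f x - h x = (1 - φ x) * (f x - g x) + φ x * s := by
    intro x; simp only [hh, ContinuousMap.coe_mk]; ring
  have hB : h ∈ uniformBall f r := by
    refine mem_uniformBall_of_bound' hr (max_lt htr hsr) fun x => ?_
    rw [hval x]
    have h1 : |(1 - φ x) * (f x - g x) + φ x * s| ≤ (1 - φ x) * t + φ x * s := by
      refine (abs_add_le _ _).trans ?_
      rw [abs_mul, abs_mul, abs_of_nonneg (by linarith [hφ1 x]), abs_of_nonneg (hφ0 x),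
        abs_of_nonneg hs0]
      have := htb x
      nlinarith [hφ0 x, hφ1 x, abs_nonneg (f x - g x)]
    refine h1.trans ?_
    nlinarith [le_max_left t s, le_max_right t s, hφ0 x, hφ1 x]
  have hKphi : ∀ x ∈ K, φ x = 0 := by
    intro x hx
    have : |x| ≤ M := by
      have := hM0 hx
      rw [Metric.mem_closedBall, Real.dist_0_eq_abs] at this
      exact this.trans hM0le
    simp [hφ, max_eq_right (by linarith : |x| - M ≤ 0)]
  have hball : h ∈ O := by
    apply hsub
    simp only [UniformSpace.ball, Set.mem_preimage, Set.mem_setOf_eq]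
    intro x hx
    simp [hh, hKphi x hx, dist_self, hε]
  have hW : ∃ x : ℝ, (n : ℝ) < |x| ∧ rn < |f x - h x| := by
    refine ⟨M + 1, ?_, ?_⟩
    · rw [abs_of_nonneg (by linarith : (0:ℝ) ≤ M + 1)]
      linarith
    · have hφM : φ (M + 1) = 1 := by
        have : |M + 1| = M + 1 := abs_of_nonneg (by linarith)
        simp [hφ, this]
      rw [hval, hφM]
      simp [abs_of_nonneg hs0]
      linarith
  exact ⟨⟨h, hB⟩, Set.mem_inter (Set.mem_preimage.2 hball) (Set.mem_preimage.2 hW)⟩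

/-- With the compact-open topology on `C(ℝ)`, the ball `B_∞(f, r)` is not a `Gδ`
set; indeed the empty set is comeager in `B_∞(f, r)`: it is the intersection of a
countable family of dense open subsets of `B_∞(f, r)` having empty intersection. -/
theorem uniformBall_not_isGδ (f : C(ℝ, ℝ)) (r : ℝ) (hr : 0 < r) :
    ¬ IsGδ (uniformBall f r) ∧
      ∃ U : ℕ → Set (uniformBall f r),
        (∀ n, IsOpen (U n) ∧ Dense (U n)) ∧ (⋂ n, U n) = ∅ := by
  set W : ℕ → Set C(ℝ, ℝ) :=
    fun n => {g : C(ℝ, ℝ) | ∃ x : ℝ, (n : ℝ) < |x| ∧ r - r / (n + 1) < |f x - g x|} with hWdef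
  set U : ℕ → Set (uniformBall f r) := fun n => Subtype.val ⁻¹' W n with hUdef
  have hU : ∀ n, IsOpen (U n) ∧ Dense (U n) := fun n =>
    ⟨(isOpen_W f r n).preimage continuous_subtype_val, dense_W f r hr n⟩
  have hI : (⋂ n, U n) = ∅ := by
    ext ⟨g, hg⟩
    simp only [Set.mem_iInter, Set.mem_empty_iff_false, iff_false]
    intro hmem
    have hle : ∀ k : ℕ, ENNReal.ofReal (r - r / (k + 1)) ≤
        ⨆ x : ℝ, ENNReal.ofReal |f x - g x| := by
      intro k
      obtain ⟨x, -, hx⟩ := hmem k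
      exact le_trans (ENNReal.ofReal_le_ofReal hx.le)
        (le_iSup (fun x => ENNReal.ofReal |f x - g x|) x)
    have htend : Filter.Tendsto (fun k : ℕ => ENNReal.ofReal (r - r / (k + 1)))
        Filter.atTop (nhds (ENNReal.ofReal r)) := by
      apply (ENNReal.continuous_ofReal.tendsto r).comp
      have : Filter.Tendsto (fun k : ℕ => r - r * (1 / ((k : ℝ) + 1)))
          Filter.atTop (nhds (r - r * 0)) :=
        tendsto_const_nhds.sub (tendsto_const_nhds.mul tendsto_one_div_add_atTop_nhds_zero_nat)
      simpa [mul_one_div, div_eq_mul_inv] using this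
    have hge : ENNReal.ofReal r ≤ ⨆ x : ℝ, ENNReal.ofReal |f x - g x| :=
      le_of_tendsto' htend hle
    exact absurd hg (not_lt.2 hge)
  have hne : (uniformBall f r).Nonempty := by
    refine ⟨f, ?_⟩
    simp only [uniformBall, Set.mem_setOf_eq, sub_self, abs_zero, ENNReal.ofReal_zero,
      iSup_const]
    exact ENNReal.ofReal_pos.2 hr
  exact ⟨not_isGδ_of_denseOpen hne U hU hI, U, hU, hI⟩
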